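/- Let f : ℝ → ℝ be differentiable with f(t)·t > 0 for all t ≠ 0, and suppose there exists μ > 1 such that t²·f'(t) ≥ μ·f(t)·t for all t ≠ 0. Then for all t ≠ 0, t·f(t) ≥ (1+μ)·F(t) > 0, where F(t) = ∫₀ᵗ f(s) ds. -/

import Mathlib

open intervalIntegral MeasureTheory

theorem stmt0 (f : ℝ → ℝ) (hf : Differentiable ℝ f)
    (hpos : ∀ t : ℝ, t ≠ 0 → f t * t > 0)
    (μ : ℝ) (hμ : 1 < μ)
    (h2 : ∀ t : ℝ, t ≠ 0 → t ^ 2 * deriv f t ≥ μ * (f t * t)) :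
    ∀ t : ℝ, t ≠ 0 →
      t * f t ≥ (1 + μ) * (∫ s in (0:ℝ)..t, f s) ∧
      (1 + μ) * (∫ s in (0:ℝ)..t, f s) > 0 := by
  have hcont : Continuous f := hf.continuous
  have hint : ∀ a b : ℝ, IntervalIntegrable f volume a b :=
    fun a b => hcont.intervalIntegrable a b
  set F : ℝ → ℝ := fun t => ∫ s in (0:ℝ)..t, f s with hFdef
  have hFderiv : ∀ x : ℝ, HasDerivAt F (f x) x := fun x =>
    intervalIntegral.integral_hasDerivAt_right (hint 0 x)
      (hcont.stronglyMeasurableAtFilter _ _) hcont.continuousAt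
  set G : ℝ → ℝ := fun x => x * f x - (1 + μ) * F x with hGdef
  have hG : ∀ x : ℝ, HasDerivAt G (x * deriv f x - μ * f x) x := by
    intro x
    have h1 : HasDerivAt (fun y : ℝ => y * f y) (1 * f x + x * deriv f x) x :=
      (hasDerivAt_id x).mul (hf x).hasDerivAt
    have h2' : HasDerivAt (fun y : ℝ => (1 + μ) * F y) ((1 + μ) * f x) x :=
      (hFderiv x).const_mul (1 + μ)
    have := h1.sub h2'
    exact this.congr_deriv (by ring)
  have hGdiff : Differentiable ℝ G := fun x => (hG x).differentiableAt
  have hGderiv : ∀ x : ℝ, deriv G x = x * deriv f x - μ * f x := fun x => (hG x).deriv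
  have hG0 : G 0 = 0 := by
    simp [hGdef, hFdef, intervalIntegral.integral_same]
  intro t ht
  rcases ht.lt_or_gt with htneg | htpos
  · -- t < 0
    have hanti : AntitoneOn G (Set.Iic 0) := by
      apply antitoneOn_of_deriv_nonpos (convex_Iic 0) hGdiff.continuous.continuousOn
        (hGdiff.differentiableOn)
      intro x hx
      rw [interior_Iic] at hx
      have hx0 : x < 0 := hx
      have hkey := h2 x (ne_of_lt hx0)
      rw [hGderiv]
      nlinarith [hkey]
    have hle : G 0 ≤ G t := hanti (Set.mem_Iic.2 (le_of_lt htneg)) Set.self_mem_Iic (le_of_lt htneg)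
    have hge : t * f t ≥ (1 + μ) * F t := by
      simp only [hGdef] at hle hG0
      linarith
    have hFpos : 0 < F t := by
      have hneg : 0 < ∫ s in t..(0:ℝ), -f s := by
        apply intervalIntegral.intervalIntegral_pos_of_pos_on ((hint t 0).neg)
        · intro x hx
          have := hpos x (ne_of_lt hx.2)
          simp only [Pi.neg_apply]
          nlinarith [hx.2]
        · exact htneg
      rw [intervalIntegral.integral_neg] at hneg
      have hsymm : F t = -∫ s in t..(0:ℝ), f s := intervalIntegral.integral_symm t 0
      linarith
    exact ⟨hge, by nlinarith⟩
  · -- t > 0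
    have hmono : MonotoneOn G (Set.Ici 0) := by
      apply monotoneOn_of_deriv_nonneg (convex_Ici 0) hGdiff.continuous.continuousOn
        (hGdiff.differentiableOn)
      intro x hx
      rw [interior_Ici] at hx
      have hx0 : 0 < x := hx
      have hkey := h2 x (ne_of_gt hx0)
      rw [hGderiv]
      nlinarith [hkey]
    have hle : G 0 ≤ G t := hmono Set.self_mem_Ici (Set.mem_Ici.2 (le_of_lt htpos)) (le_of_lt htpos)
    have hge : t * f t ≥ (1 + μ) * F t := by
      simp only [hGdef] at hle hG0
      linarith
    have hFpos : 0 < F t := by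
      apply intervalIntegral.intervalIntegral_pos_of_pos_on (hint 0 t)
      · intro x hx
        have := hpos x (ne_of_gt hx.1)
        nlinarith [hx.1]
      · exact htpos
    exact ⟨hge, by nlinarith⟩
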